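/- For every x=(x₂,x₃)∈ℝ² with x₃ ≠ 0 one has (DB)(x) = A(x) and B(x) − (DA)(x) = 2^{−3/2}·(4x₂² − 1/π)·e^{−π(x₂²+x₃²)}. (These are the two scalar components of the identity d ψ̃₀,₁(x) = φ₁,₁(x) of paper Lemma 5.12, where 2^{−3/2}·(4x₂²−1/π)·e^{−π(x₂²+x₃²)} is the coefficient of the Kudla–Millson form φ₁,₁.) -/

import Mathlib

open MeasureTheory

/-- The upper incomplete gamma function `Γ(1/2, a) = ∫_a^∞ e^{-u} u^{-1/2} du`. -/
noncomputable def Ginc (a : ℝ) : ℝ := ∫ u in Set.Ioi a, Real.exp (-u) * u ^ (-(1:ℝ)/2)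

lemma fg_contAt {u : ℝ} (hu : u ≠ 0) :
    ContinuousAt (fun u : ℝ => Real.exp (-u) * u ^ (-(1:ℝ)/2)) u :=
  ((Real.continuous_exp.comp continuous_neg).continuousAt).mul
    (Real.continuousAt_rpow_const u _ (Or.inl hu))

lemma fg_contOn : ContinuousOn (fun u : ℝ => Real.exp (-u) * u ^ (-(1:ℝ)/2)) (Set.Ioi 0) :=
  continuousOn_of_forall_continuousAt fun u hu => fg_contAt (ne_of_gt hu)

lemma fg_int {b : ℝ} (hb : 0 < b) :
    IntegrableOn (fun u : ℝ => Real.exp (-u) * u ^ (-(1:ℝ)/2)) (Set.Ioi b) := by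
  have hg : IntegrableOn (fun u : ℝ => b ^ (-(1:ℝ)/2) * Real.exp (-(1:ℝ) * u)) (Set.Ioi b) :=
    (exp_neg_integrableOn_Ioi b one_pos).const_mul _
  refine hg.mono' ((fg_contOn.mono ?_).aestronglyMeasurable measurableSet_Ioi) ?_
  · exact Set.Ioi_subset_Ioi hb.le
  filter_upwards [ae_restrict_mem measurableSet_Ioi] with u hu
  have h0 : 0 < u := hb.trans hu
  rw [Real.norm_eq_abs, abs_of_nonneg (by positivity)]
  have h1 : u ^ (-(1:ℝ)/2) ≤ b ^ (-(1:ℝ)/2) :=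
    Real.rpow_le_rpow_of_nonpos hb hu.le (by norm_num)
  calc Real.exp (-u) * u ^ (-(1:ℝ)/2) ≤ Real.exp (-u) * b ^ (-(1:ℝ)/2) :=
        mul_le_mul_of_nonneg_left h1 (Real.exp_pos _).le
    _ = b ^ (-(1:ℝ)/2) * Real.exp (-(1:ℝ) * u) := by rw [neg_one_mul]; ring

lemma Ginc_hasDerivAt {a : ℝ} (ha : 0 < a) :
    HasDerivAt Ginc (-(Real.exp (-a) * a ^ (-(1:ℝ)/2))) a := by
  set f : ℝ → ℝ := fun u => Real.exp (-u) * u ^ (-(1:ℝ)/2) with hf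
  set b := a / 2 with hb'
  have hb : 0 < b := by positivity
  have hba : b < a := by rw [hb']; linarith
  have hii : IntervalIntegrable f volume b a := by
    apply ContinuousOn.intervalIntegrable
    apply fg_contOn.mono
    intro u hu
    rcases hu with ⟨h1, _⟩
    simp only [min_eq_left hba.le] at h1
    exact hb.trans_le h1
  have hsm : StronglyMeasurableAtFilter f (nhds a) volume :=
    ContinuousAt.stronglyMeasurableAtFilter isOpen_Ioi
      (fun u hu => fg_contAt (ne_of_gt hu)) a ha
  have hder : HasDerivAt (fun t => Ginc b - ∫ u in b..t, f u)
      (-(Real.exp (-a) * a ^ (-(1:ℝ)/2))) a := by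
    have h := intervalIntegral.integral_hasDerivAt_right hii hsm (fg_contAt ha.ne')
    exact h.const_sub (Ginc b)
  apply hder.congr_of_eventuallyEq
  filter_upwards [Ioi_mem_nhds hba] with t ht
  have hsplit : (∫ u in Set.Ioi b, f u)
      = (∫ u in Set.Ioc b t, f u) + ∫ u in Set.Ioi t, f u := by
    rw [← MeasureTheory.setIntegral_union (Set.Ioc_disjoint_Ioi le_rfl) measurableSet_Ioi
      ((fg_int hb).mono_set Set.Ioc_subset_Ioi_self) (fg_int (hb.trans ht)),
      Set.Ioc_union_Ioi_eq_Ioi ht.le]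
  have h1 : Ginc t = ∫ u in Set.Ioi t, f u := rfl
  have h2 : Ginc b = ∫ u in Set.Ioi b, f u := rfl
  rw [h1, h2, intervalIntegral.integral_of_le ht.le]
  rw [hsplit]
  ring

/-- The `e₂`-component `A` of the singular Schwartz function `ψ̃₀,₁`. -/
noncomputable def A (x : ℝ × ℝ) : ℝ :=
  (1 / (2 * Real.sqrt Real.pi)) * x.1 * Real.sign x.2 * Ginc (2 * Real.pi * x.2 ^ 2) *
    Real.exp (-(Real.pi * (x.1 ^ 2 - x.2 ^ 2)))

/-- The `e₃`-component `B` of the singular Schwartz function `ψ̃₀,₁`. -/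
noncomputable def B (x : ℝ × ℝ) : ℝ :=
  -(1 / (2 * Real.sqrt 2 * Real.pi)) * Real.exp (-(Real.pi * (x.1 ^ 2 + x.2 ^ 2)))
  + (1 / (2 * Real.sqrt Real.pi)) * |x.2| * Ginc (2 * Real.pi * x.2 ^ 2) *
      Real.exp (-(Real.pi * (x.1 ^ 2 - x.2 ^ 2)))

/-- Paper Lemma 5.12, scalar components of `dψ̃₀,₁ = φ₁,₁`: for `x₃ ≠ 0`,
`(DB)(x) = A(x)` and `B(x) - (DA)(x) = 2^{-3/2}(4x₂² - 1/π)e^{-π(x₂²+x₃²)}`,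
where `(Dg)(x) = x₃·∂g/∂x₂(x) + x₂·∂g/∂x₃(x)`. -/
theorem stmt6 (x₂ x₃ : ℝ) (hx : x₃ ≠ 0) :
    (∃ d₂ d₃ : ℝ,
      HasDerivAt (fun t : ℝ => B (t, x₃)) d₂ x₂ ∧
      HasDerivAt (fun t : ℝ => B (x₂, t)) d₃ x₃ ∧
      x₃ * d₂ + x₂ * d₃ = A (x₂, x₃)) ∧
    (∃ d₂ d₃ : ℝ,
      HasDerivAt (fun t : ℝ => A (t, x₃)) d₂ x₂ ∧
      HasDerivAt (fun t : ℝ => A (x₂, t)) d₃ x₃ ∧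
      B (x₂, x₃) - (x₃ * d₂ + x₂ * d₃)
        = (2:ℝ) ^ (-(3:ℝ)/2) * (4 * x₂ ^ 2 - 1 / Real.pi) *
            Real.exp (-(Real.pi * (x₂ ^ 2 + x₃ ^ 2)))) := by
  have hπ := Real.pi_pos
  have ha : (0:ℝ) < 2 * Real.pi * x₃ ^ 2 := by positivity
  have hG := Ginc_hasDerivAt ha
  -- inner derivatives
  have e1 : HasDerivAt (fun t : ℝ => -(Real.pi * (t ^ 2 + x₃ ^ 2))) (-(Real.pi * (2 * x₂))) x₂ := by
    have h := (((hasDerivAt_pow 2 x₂).add_const (x₃ ^ 2)).const_mul Real.pi).neg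
    exact h.congr_deriv (by push_cast; ring)
  have e2 : HasDerivAt (fun t : ℝ => -(Real.pi * (t ^ 2 - x₃ ^ 2))) (-(Real.pi * (2 * x₂))) x₂ := by
    have h := (((hasDerivAt_pow 2 x₂).sub_const (x₃ ^ 2)).const_mul Real.pi).neg
    exact h.congr_deriv (by push_cast; ring)
  have f1 : HasDerivAt (fun t : ℝ => -(Real.pi * (x₂ ^ 2 + t ^ 2))) (-(Real.pi * (2 * x₃))) x₃ := by
    have h := (((hasDerivAt_pow 2 x₃).const_add (x₂ ^ 2)).const_mul Real.pi).neg
    exact h.congr_deriv (by push_cast; ring)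
  have f2 : HasDerivAt (fun t : ℝ => -(Real.pi * (x₂ ^ 2 - t ^ 2))) (Real.pi * (2 * x₃)) x₃ := by
    have h := (((hasDerivAt_pow 2 x₃).const_sub (x₂ ^ 2)).const_mul Real.pi).neg
    exact h.congr_deriv (by push_cast; ring)
  have f3 : HasDerivAt (fun t : ℝ => 2 * Real.pi * t ^ 2) (2 * Real.pi * (2 * x₃)) x₃ := by
    have h := (hasDerivAt_pow 2 x₃).const_mul (2 * Real.pi)
    exact h.congr_deriv (by push_cast; ring)
  have f4 : HasDerivAt (fun t : ℝ => Ginc (2 * Real.pi * t ^ 2))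
      (-(Real.exp (-(2 * Real.pi * x₃ ^ 2)) * (2 * Real.pi * x₃ ^ 2) ^ (-(1:ℝ)/2))
        * (2 * Real.pi * (2 * x₃))) x₃ := by have := hG.comp x₃ f3; exact this
  set s : ℝ := Real.sign x₃ with hs
  have habs : HasDerivAt (fun t : ℝ => |t|) s x₃ := by
    rcases hx.lt_or_gt with h | h
    · simpa [hs, Real.sign_of_neg h] using hasDerivAt_abs_neg h
    · simpa [hs, Real.sign_of_pos h] using hasDerivAt_abs_pos h
  have hsx : s * x₃ = |x₃| := by
    rcases hx.lt_or_gt with h | h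
    · rw [hs, Real.sign_of_neg h, abs_of_neg h]; ring
    · rw [hs, Real.sign_of_pos h, abs_of_pos h]; ring
  have hss : s * s = 1 := by
    rcases hx.lt_or_gt with h | h
    · rw [hs, Real.sign_of_neg h]; ring
    · rw [hs, Real.sign_of_pos h]; ring
  -- rpow fact
  have hr : (2 * Real.pi * x₃ ^ 2) ^ (-(1:ℝ)/2)
      = (Real.sqrt 2 * Real.sqrt Real.pi * |x₃|)⁻¹ := by
    rw [show (-(1:ℝ)/2) = -(1/2 : ℝ) by norm_num, Real.rpow_neg ha.le,
      ← Real.sqrt_eq_rpow, show 2 * Real.pi * x₃ ^ 2 = 2 * Real.pi * x₃ ^ 2 from rfl,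
      Real.sqrt_mul (by positivity), Real.sqrt_mul (by norm_num), Real.sqrt_sq_eq_abs]
  -- exp fact
  have hE : Real.exp (-(2 * Real.pi * x₃ ^ 2)) * Real.exp (-(Real.pi * (x₂ ^ 2 - x₃ ^ 2)))
      = Real.exp (-(Real.pi * (x₂ ^ 2 + x₃ ^ 2))) := by
    rw [← Real.exp_add]; ring_nf
  have hsp : Real.sqrt Real.pi * Real.sqrt Real.pi = Real.pi := Real.mul_self_sqrt hπ.le
  have hs2 : Real.sqrt 2 * Real.sqrt 2 = 2 := Real.mul_self_sqrt (by norm_num)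
  have hsp0 : Real.sqrt Real.pi ≠ 0 := by positivity
  have hs20 : Real.sqrt 2 ≠ 0 := by positivity
  have hB2 := (e1.exp.const_mul (-(1 / (2 * Real.sqrt 2 * Real.pi)))).add
    ((e2.exp).const_mul (1 / (2 * Real.sqrt Real.pi) * |x₃| * Ginc (2 * Real.pi * x₃ ^ 2)))
  have hB3 := (f1.exp.const_mul (-(1 / (2 * Real.sqrt 2 * Real.pi)))).add
    (((habs.const_mul (1 / (2 * Real.sqrt Real.pi))).mul f4).mul f2.exp)
  have hA2 := ((((hasDerivAt_id x₂).const_mul (1 / (2 * Real.sqrt Real.pi))).mul_const s).mul_const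
    (Ginc (2 * Real.pi * x₃ ^ 2))).mul e2.exp
  have hA3g := (f4.const_mul (1 / (2 * Real.sqrt Real.pi) * x₂ * s)).mul f2.exp
  constructor
  · refine ⟨_, _, hB2, hB3, ?_⟩
    simp only [A, Pi.mul_apply]
    rw [hr, ← hsx, ← hE, ← hs]
    have hx3 : s * x₃ ≠ 0 := by rw [hsx]; exact abs_ne_zero.mpr hx
    have hs0 : s ≠ 0 := left_ne_zero_of_mul hx3
    generalize Real.exp (-(2 * Real.pi * x₃ ^ 2)) = E1
    generalize Real.exp (-(Real.pi * (x₂ ^ 2 - x₃ ^ 2))) = E2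
    generalize Ginc (2 * Real.pi * x₃ ^ 2) = G
    generalize hq : Real.sqrt Real.pi = q at hsp hsp0 ⊢
    rw [← hsp]
    field_simp
    ring
  · refine ⟨_, _, hA2, hA3g.congr_of_eventuallyEq ?_, ?_⟩
    · rcases hx.lt_or_gt with h | h
      · filter_upwards [Iio_mem_nhds h] with t ht
        simp only [A, hs, Real.sign_of_neg ht, Real.sign_of_neg h, Pi.mul_apply]
      · filter_upwards [Ioi_mem_nhds h] with t ht
        simp only [A, hs, Real.sign_of_pos ht, Real.sign_of_pos h, Pi.mul_apply]
    · have h232 : (2:ℝ) ^ (-(3:ℝ)/2) = 1 / (2 * Real.sqrt 2) := by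
        rw [show (-(3:ℝ)/2) = -(3/2:ℝ) by norm_num,
          Real.rpow_neg (by norm_num : (0:ℝ) ≤ 2),
          show (3/2:ℝ) = 1 + 1/2 by norm_num,
          Real.rpow_add (by norm_num : (0:ℝ) < 2), Real.rpow_one,
          ← Real.sqrt_eq_rpow, one_div]
      simp only [B, id_eq, Pi.mul_apply]
      rw [h232, hr, ← hsx, ← hE]
      have hx3 : s * x₃ ≠ 0 := by rw [hsx]; exact abs_ne_zero.mpr hx
      have hs0 : s ≠ 0 := left_ne_zero_of_mul hx3
      generalize Real.exp (-(2 * Real.pi * x₃ ^ 2)) = E1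
      generalize Real.exp (-(Real.pi * (x₂ ^ 2 - x₃ ^ 2))) = E2
      generalize Ginc (2 * Real.pi * x₃ ^ 2) = G
      generalize hq : Real.sqrt Real.pi = q at hsp hsp0 ⊢
      rw [← hsp]
      field_simp
      ring
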